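/- Let N be a positive integer, z ∈ ℂ, and let u be a generalised eigenvector associated with z with (u_0, u_1)ᵗ = α ∈ 𝓗 ⊕ 𝓗. Then for every n ≥ 1: |S_{n+1}(α, z) − S_n(α, z)| ≤ ‖X_n(z)‖·‖a_{n+N}‖·(‖a_{n+N}^{-1} a_{n+N-1}^* − a_n^{-1} a_{n-1}^*‖ + |z|·‖a_{n+N}^{-1} − a_n^{-1}‖ + |z − z̄|·‖a_{n+N}^{-1}‖ + ‖a_{n+N}^{-1} b_{n+N} − a_n^{-1} b_n‖)·(‖u_{n-1}‖² + ‖u_n‖²). -/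

import Mathlib

open ContinuousLinearMap Filter
open scoped ENNReal NNReal
noncomputable section

variable {H : Type*} [NormedAddCommGroup H] [InnerProductSpace ℂ H] [CompleteSpace H]

/-- The Hilbert space direct sum `𝓗 ⊕ 𝓗`. -/
abbrev H2 (H : Type*) [NormedAddCommGroup H] [InnerProductSpace ℂ H] : Type _ :=
  WithLp 2 (H × H)

/-- The column vector `(x, y)ᵗ` as an element of `𝓗 ⊕ 𝓗`. -/
def pr (x y : H) : H2 H := (WithLp.equiv 2 (H × H)).symm (x, y)

/-- The block operator `[[A, B], [C, D]]` on `𝓗 ⊕ 𝓗`. -/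
def blk (A B C D : H →L[ℂ] H) : H2 H →L[ℂ] H2 H :=
  ((WithLp.prodContinuousLinearEquiv 2 ℂ H H).symm : (H × H) →L[ℂ] H2 H) ∘L
    ((A ∘L ContinuousLinearMap.fst ℂ H H + B ∘L ContinuousLinearMap.snd ℂ H H).prod
      (C ∘L ContinuousLinearMap.fst ℂ H H + D ∘L ContinuousLinearMap.snd ℂ H H)) ∘L
    ((WithLp.prodContinuousLinearEquiv 2 ℂ H H) : H2 H →L[ℂ] (H × H))

/-- The real part `sym X = (X + X^*)/2` of a bounded operator. -/
def sym {E : Type*} [NormedAddCommGroup E] [InnerProductSpace ℂ E] [CompleteSpace E]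
    (X : E →L[ℂ] E) : E →L[ℂ] E :=
  (2 : ℂ)⁻¹ • (X + ContinuousLinearMap.adjoint X)

/-- `X` is strictly positive: `⟨Xv, v⟩ ≥ c‖v‖²` for some `c > 0`. -/
def StrictlyPos {E : Type*} [NormedAddCommGroup E] [InnerProductSpace ℂ E] [CompleteSpace E]
    (X : E →L[ℂ] E) : Prop :=
  ∃ c > (0 : ℝ), ∀ v : E, c * ‖v‖ ^ 2 ≤ (inner ℂ (X v) v : ℂ).re

/-- `X'` is a two-sided bounded inverse of `X`. -/
def Inverts (X X' : H →L[ℂ] H) : Prop := X' ∘L X = 1 ∧ X ∘L X' = 1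

/-- The formal Jacobi matrix `𝒜`: `(𝒜u)₀ = b₀u₀ + a₀u₁`,
`(𝒜u)ₙ = aₙ₋₁^* uₙ₋₁ + bₙ uₙ + aₙ uₙ₊₁` for `n ≥ 1`. -/
def jacobiA (a b : ℕ → H →L[ℂ] H) (u : ℕ → H) : ℕ → H
  | 0 => b 0 (u 0) + a 0 (u 1)
  | n + 1 => adjoint (a n) (u n) + b (n + 1) (u (n + 1)) + a (n + 1) (u (n + 2))

/-- The generalised eigenvector recurrence
`aₙ₋₁^* uₙ₋₁ + bₙ uₙ + aₙ uₙ₊₁ = z uₙ` for all `n ≥ 1`. -/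
def GenEigRec (a b : ℕ → H →L[ℂ] H) (z : ℂ) (u : ℕ → H) : Prop :=
  ∀ n : ℕ, adjoint (a n) (u n) + b (n + 1) (u (n + 1)) + a (n + 1) (u (n + 2)) = z • u (n + 1)

/-- `u` is a generalised eigenvector associated with `z`. -/
def IsGenEig (a b : ℕ → H →L[ℂ] H) (z : ℂ) (u : ℕ → H) : Prop :=
  u ≠ 0 ∧ GenEigRec a b z u

/-- `u` belongs to `ℓ²(ℕ; 𝓗)`. -/
def MemL2 (u : ℕ → H) : Prop := Summable fun n => ‖u n‖ ^ 2

/-- The transfer matrix `Bₙ(z)`; here `a'` is the sequence of inverses `aₙ⁻¹`. -/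
def transfer (a a' b : ℕ → H →L[ℂ] H) (z : ℂ) (n : ℕ) : H2 H →L[ℂ] H2 H :=
  blk 0 1 (-(a' n ∘L adjoint (a (n - 1)))) (a' n ∘L (z • (1 : H →L[ℂ] H) - b n))

/-- `prodD B n k = B (n+k-1) ∘ ⋯ ∘ B n`. -/
def prodD (B : ℕ → (H2 H →L[ℂ] H2 H)) : ℕ → ℕ → (H2 H →L[ℂ] H2 H)
  | _, 0 => 1
  | n, k + 1 => B (n + k) ∘L prodD B n k

/-- `sym (diag(a_{n+N-1}, a_{n+N-1}^*) · E · Xₙ(z))` where `Xₙ(z) = B_{n+N-1}(z)⋯Bₙ(z)`. -/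
def turanOp (a a' b : ℕ → H →L[ℂ] H) (N : ℕ) (z : ℂ) (n : ℕ) : H2 H →L[ℂ] H2 H :=
  sym (blk (a (n + N - 1)) 0 0 (adjoint (a (n + N - 1))) ∘L blk 0 (-1) 1 0 ∘L
    prodD (transfer a a' b z) n N)

/-- The `N`-shifted Turán determinant `Sₙ(α, z)` of a generalised eigenvector `u`. -/
def turanS (a a' b : ℕ → H →L[ℂ] H) (N : ℕ) (z : ℂ) (u : ℕ → H) (n : ℕ) : ℝ :=
  (inner ℂ (turanOp a a' b N z n (pr (u (n - 1)) (u n))) (pr (u (n - 1)) (u n)) : ℂ).re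

/-- The family `{Q^z : z ∈ K}` is uniformly non-degenerated on `K`, where
`Qₙ^z(v) = ‖a_{n+N-1}‖⁻¹ ⟨sym(diag(a_{n+N-1}, a_{n+N-1}^*)·E·Xₙ(z)) v, v⟩`. -/
def UnifNonDeg (a a' b : ℕ → H →L[ℂ] H) (N : ℕ) (K : Set ℂ) : Prop :=
  ∃ c ≥ (1 : ℝ), ∃ M : ℕ, 1 ≤ M ∧ ∀ v : H2 H, ∀ z ∈ K, ∀ n : ℕ, M ≤ n →
    c⁻¹ * ‖v‖ ^ 2 ≤ |‖a (n + N - 1)‖⁻¹ * (inner ℂ (turanOp a a' b N z n v) v : ℂ).re| ∧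
    |‖a (n + N - 1)‖⁻¹ * (inner ℂ (turanOp a a' b N z n v) v : ℂ).re| ≤ c * ‖v‖ ^ 2

/-- The matrix `𝓑ᵢ(z) = [[0, Id], [−Rᵢ, z Tᵢ − Qᵢ]]`. -/
def calB (T Q R : ℕ → H →L[ℂ] H) (z : ℂ) (i : ℕ) : H2 H →L[ℂ] H2 H :=
  blk 0 1 (-(R i)) (z • T i - Q i)

/-- `ℱ(λ) = sym([[0, −C_{N-1}], [C_{N-1}^*, 0]] · 𝓑_{N-1}(λ)⋯𝓑₀(λ))` from Theorem B. -/
def calF (T Q R C : ℕ → H →L[ℂ] H) (N : ℕ) (lam : ℝ) : H2 H →L[ℂ] H2 H :=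
  sym (blk 0 (-(C (N - 1))) (adjoint (C (N - 1))) 0 ∘L prodD (calB T Q R (lam : ℂ)) 0 N)

/-- The quadratic-form operator of the commutator approach (`al` is the sequence `α`):
`sym [[α_{n-1} a_{n-1}^*, −α_{n-1}(λ − bₙ)], [0, αₙ aₙ^*]]`. -/
def commOp (a b al : ℕ → H →L[ℂ] H) (lam : ℝ) (n : ℕ) : H2 H →L[ℂ] H2 H :=
  sym (blk (al (n - 1) ∘L adjoint (a (n - 1)))
    (-(al (n - 1) ∘L ((lam : ℂ) • (1 : H →L[ℂ] H) - b n))) 0 (al n ∘L adjoint (a n)))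

/-- `Sₙ(α, λ)` of the commutator approach. -/
def commS (a b al : ℕ → H →L[ℂ] H) (lam : ℝ) (u : ℕ → H) (n : ℕ) : ℝ :=
  (inner ℂ (commOp a b al lam n (pr (u (n - 1)) (u n))) (pr (u (n - 1)) (u n)) : ℂ).re

/-- `sym [[αₙ aₙ^*, −(λ − bₙ) aₙ₋₁⁻¹ αₙ₋₁ aₙ], [0, aₙ^* aₙ₋₁⁻¹ αₙ₋₁ aₙ]]`;
its normalisation converges to `C(λ)`. -/
def climOp (a a' b al : ℕ → H →L[ℂ] H) (lam : ℝ) (n : ℕ) : H2 H →L[ℂ] H2 H :=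
  sym (blk (al n ∘L adjoint (a n))
    (-((((lam : ℂ) • (1 : H →L[ℂ] H) - b n)) ∘L a' (n - 1) ∘L al (n - 1) ∘L a n))
    0
    (adjoint (a n) ∘L a' (n - 1) ∘L al (n - 1) ∘L a n))

/-- Consecutive pairs `(uₙ, uₙ₊₁)` of the generalised eigenvector with initial data `α`. -/
def genPair (a a' b : ℕ → H →L[ℂ] H) (z : ℂ) (α : H2 H) : ℕ → H × H
  | 0 => (WithLp.equiv 2 (H × H)) α
  | n + 1 =>
      let p := genPair a a' b z α n
      (p.2, a' (n + 1) (z • p.2 - b (n + 1) p.2 - adjoint (a n) p.1))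

/-- The generalised eigenvector with initial data `(u₀, u₁)ᵗ = α`. -/
def genVec (a a' b : ℕ → H →L[ℂ] H) (z : ℂ) (α : H2 H) (n : ℕ) : H :=
  (genPair a a' b z α n).1

/-- Iterated logarithm `log^{(i)}`. -/
def iterLog : ℕ → ℝ → ℝ
  | 0, x => x
  | i + 1, x => Real.log (iterLog i x)

/-- `g_j(x) = ∏_{i=1}^j log^{(i)}(x)`. -/
def gfun (j : ℕ) (x : ℝ) : ℝ := ∏ i ∈ Finset.Icc 1 j, iterLog i x


set_option linter.unusedSectionVars false
set_option maxHeartbeats 1000000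

lemma blk_apply (A B C D : H →L[ℂ] H) (v : H2 H) :
    blk A B C D v = pr (A v.fst + B v.snd) (C v.fst + D v.snd) := rfl

@[simp] lemma pr_fst (x y : H) : (pr x y).fst = x := rfl
@[simp] lemma pr_snd (x y : H) : (pr x y).snd = y := rfl

lemma pr_congr {x y x' y' : H} (h1 : x = x') (h2 : y = y') : pr x y = pr x' y' := by
  rw [h1, h2]

lemma inner_pr (x y x' y' : H) :
    (inner ℂ (pr x y) (pr x' y') : ℂ) = inner ℂ x x' + inner ℂ y y' := rfl

lemma norm_pr_sq (x y : H) : ‖pr x y‖ ^ 2 = ‖x‖ ^ 2 + ‖y‖ ^ 2 :=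
  WithLp.prod_norm_sq_eq_of_L2 (pr x y)

lemma blk_comp (A B C D A' B' C' D' : H →L[ℂ] H) :
    blk A B C D ∘L blk A' B' C' D' =
      blk (A ∘L A' + B ∘L C') (A ∘L B' + B ∘L D')
          (C ∘L A' + D ∘L C') (C ∘L B' + D ∘L D') := by
  refine ContinuousLinearMap.ext fun v => ?_
  rw [comp_apply, blk_apply, blk_apply, blk_apply]
  exact pr_congr (by simp [map_add]; abel) (by simp [map_add]; abel)

lemma blk_sub (A B C D A' B' C' D' : H →L[ℂ] H) :
    blk A B C D - blk A' B' C' D' = blk (A - A') (B - B') (C - C') (D - D') := by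
  refine ContinuousLinearMap.ext fun v => ?_
  rw [sub_apply, blk_apply, blk_apply, blk_apply]
  have : ∀ (x y x' y' : H), pr x y - pr x' y' = pr (x - x') (y - y') := fun _ _ _ _ => rfl
  rw [this]
  exact pr_congr (by simp; abel) (by simp; abel)

lemma blk_congr {A B C D A' B' C' D' : H →L[ℂ] H}
    (h1 : A = A') (h2 : B = B') (h3 : C = C') (h4 : D = D') :
    blk A B C D = blk A' B' C' D' := by rw [h1, h2, h3, h4]

lemma blk_adjoint (A B C D : H →L[ℂ] H) :
    adjoint (blk A B C D) = blk (adjoint A) (adjoint C) (adjoint B) (adjoint D) := by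
  symm
  apply ContinuousLinearMap.eq_adjoint_iff _ _ |>.mpr
  intro v w
  rw [blk_apply, blk_apply, show v = pr v.fst v.snd from rfl, show w = pr w.fst w.snd from rfl]
  simp only [pr_fst, pr_snd, inner_pr, inner_add_left, inner_add_right, adjoint_inner_left]
  ring

lemma my_norm_snd_le (v : H2 H) : ‖v.snd‖ ≤ ‖v‖ := by
  have h := WithLp.prod_norm_sq_eq_of_L2 v
  nlinarith [norm_nonneg v, norm_nonneg v.fst, norm_nonneg v.snd]

lemma norm_blk_0B0D_le (B D : H →L[ℂ] H) : ‖blk 0 B 0 D‖ ≤ ‖B‖ + ‖D‖ := by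
  refine opNorm_le_bound _ (by positivity) fun v => ?_
  rw [blk_apply]
  have h2 : ‖v.snd‖ ≤ ‖v‖ := my_norm_snd_le v
  have hB : ‖B v.snd‖ ≤ ‖B‖ * ‖v‖ := le_trans (le_opNorm _ _) (by gcongr)
  have hD : ‖D v.snd‖ ≤ ‖D‖ * ‖v‖ := le_trans (le_opNorm _ _) (by gcongr)
  have key : ‖pr ((0:H→L[ℂ]H) v.fst + B v.snd) ((0:H→L[ℂ]H) v.fst + D v.snd)‖ ^ 2
      ≤ ((‖B‖ + ‖D‖) * ‖v‖)^2 := by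
    rw [norm_pr_sq]
    simp only [zero_apply, zero_add]
    nlinarith [norm_nonneg (B v.snd), norm_nonneg (D v.snd), norm_nonneg v,
      opNorm_nonneg B, opNorm_nonneg D]
  nlinarith [norm_nonneg (pr ((0:H→L[ℂ]H) v.fst + B v.snd) ((0:H→L[ℂ]H) v.fst + D v.snd)),
    mul_nonneg (by positivity : (0:ℝ) ≤ ‖B‖+‖D‖) (norm_nonneg v)]

lemma re_inner_sym {E : Type*} [NormedAddCommGroup E] [InnerProductSpace ℂ E] [CompleteSpace E]
    (T : E →L[ℂ] E) (v : E) :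
    (inner ℂ (sym T v) v : ℂ).re = (inner ℂ (T v) v : ℂ).re := by
  have hadj : (inner ℂ (adjoint T v) v : ℂ) = starRingEnd ℂ (inner ℂ (T v) v) := by
    rw [adjoint_inner_left, inner_conj_symm]
  simp only [sym, ContinuousLinearMap.smul_apply, ContinuousLinearMap.add_apply,
    inner_smul_left, inner_add_left, hadj]
  rw [Complex.add_conj]
  simp [Complex.mul_re]

lemma prodD_shift (Bm : ℕ → (H2 H →L[ℂ] H2 H)) (n : ℕ) (k : ℕ) :
    prodD Bm (n+1) k ∘L Bm n = Bm (n + k) ∘L prodD Bm n k := by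
  induction k with
  | zero => exact ContinuousLinearMap.ext fun v => rfl
  | succ k ih =>
      have h1 : prodD Bm (n+1) (k+1) = Bm (n+1+k) ∘L prodD Bm (n+1) k := rfl
      have h2 : prodD Bm n (k+1) = Bm (n+k) ∘L prodD Bm n k := rfl
      rw [h1, h2, ContinuousLinearMap.comp_assoc, ih, ← ContinuousLinearMap.comp_assoc,
        ← ContinuousLinearMap.comp_assoc, show n+1+k = n+(k+1) by omega]

lemma gen_step (a b a' : ℕ → H →L[ℂ] H) (hinv : ∀ n, Inverts (a n) (a' n))
    (z : ℂ) (u : ℕ → H) (hu : GenEigRec a b z u) (m : ℕ) :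
    transfer a a' b z (m+1) (pr (u m) (u (m+1))) = pr (u (m+1)) (u (m+2)) := by
  rw [transfer, blk_apply]
  refine pr_congr (by simp) ?_
  have h3 : a (m+1) (u (m+2)) = z • u (m+1) - b (m+1) (u (m+1)) - adjoint (a m) (u m) := by
    rw [← hu m]; abel
  have h2 : a' (m+1) ((a (m+1)) (u (m+2))) = u (m+2) := by
    have := congrArg (fun T => T (u (m+2))) (hinv (m+1)).1
    simpa using this
  simp only [pr_fst, pr_snd, ContinuousLinearMap.neg_apply, ContinuousLinearMap.comp_apply,
    ContinuousLinearMap.sub_apply, ContinuousLinearMap.smul_apply, ContinuousLinearMap.one_apply]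
  rw [← h2, h3]
  simp only [map_sub, map_smul]
  simp only [Nat.add_sub_cancel]
  abel

lemma delta_eq (a b a' : ℕ → H →L[ℂ] H) (hinv : ∀ n, Inverts (a n) (a' n))
    (hb : ∀ n, IsSelfAdjoint (b n)) (z : ℂ) (m j : ℕ) :
    adjoint (transfer a a' b z (m+1)) ∘L
        (blk (a (j+1)) 0 0 (adjoint (a (j+1))) ∘L (blk 0 (-1) 1 0 ∘L transfer a a' b z (j+1)))
      - blk (a j) 0 0 (adjoint (a j)) ∘L blk 0 (-1) 1 0
    = blk 0
        (adjoint (a' (j+1) ∘L adjoint (a j) - a' (m+1) ∘L adjoint (a m)) ∘L adjoint (a (j+1)))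
        0
        (adjoint (-(z • (a' (j+1) - a' (m+1))) + (z - (starRingEnd ℂ) z) • a' (j+1)
            + (a' (j+1) ∘L b (j+1) - a' (m+1) ∘L b (m+1))) ∘L adjoint (a (j+1)))
    := by
  have adj0 : adjoint (0 : H →L[ℂ] H) = 0 := by
    rw [← star_eq_adjoint]; exact star_zero _
  have adj1 : adjoint (1 : H →L[ℂ] H) = 1 := by
    rw [← star_eq_adjoint]; exact star_one _
  have adjneg : ∀ T : H →L[ℂ] H, adjoint (-T) = -adjoint T := fun T => by
    rw [← star_eq_adjoint, ← star_eq_adjoint]; exact star_neg _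
  have adjsub : ∀ S T : H →L[ℂ] H, adjoint (S - T) = adjoint S - adjoint T := fun S T => by
    rw [← star_eq_adjoint, ← star_eq_adjoint, ← star_eq_adjoint]; exact star_sub _ _
  have adjadd : ∀ S T : H →L[ℂ] H, adjoint (S + T) = adjoint S + adjoint T := fun S T => by
    rw [← star_eq_adjoint, ← star_eq_adjoint, ← star_eq_adjoint]; exact star_add _ _
  have adjsmul : ∀ (c : ℂ) (T : H →L[ℂ] H),
      adjoint (c • T) = (starRingEnd ℂ c) • adjoint T := fun c T => by
    rw [← star_eq_adjoint, ← star_eq_adjoint]; exact star_smul _ _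
  have hbadj : ∀ i, adjoint (b i) = b i := fun i => by
    rw [← star_eq_adjoint]; exact hb i
  have hadj : ∀ i, adjoint (a' i) ∘L adjoint (a i) = 1 := fun i => by
    rw [← adjoint_comp, (hinv i).2, adj1]
  have hid1 : ∀ T : H →L[ℂ] H, (1 : H →L[ℂ] H) ∘L T = T := fun T =>
    ContinuousLinearMap.ext fun x => rfl
  have hid2 : ∀ T : H →L[ℂ] H, T ∘L (1 : H →L[ℂ] H) = T := fun T =>
    ContinuousLinearMap.ext fun x => rfl
  simp only [transfer, Nat.add_sub_cancel]
  rw [blk_adjoint, blk_comp, blk_comp, blk_comp, blk_comp, blk_sub]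
  refine blk_congr ?_ ?_ ?_ ?_
  · simp [adj0]
  · simp only [adj0, adjneg, adjoint_comp, adjoint_adjoint, adjsub, adjsmul, adjadd, hbadj,
      adj1, ContinuousLinearMap.zero_comp, ContinuousLinearMap.comp_zero,
      hid1, hid2, zero_add, add_zero, neg_zero,
      ContinuousLinearMap.neg_comp, ContinuousLinearMap.comp_neg, neg_neg,
      ContinuousLinearMap.add_comp, ContinuousLinearMap.sub_comp,
      ContinuousLinearMap.smul_comp, ContinuousLinearMap.comp_assoc, hadj]
    module
  · simp only [adj0, adjneg, adjoint_comp, adjoint_adjoint, adjsub, adjsmul, adjadd, hbadj,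
      adj1, ContinuousLinearMap.zero_comp, ContinuousLinearMap.comp_zero,
      hid1, hid2, zero_add, add_zero, neg_zero,
      ContinuousLinearMap.neg_comp, ContinuousLinearMap.comp_neg, neg_neg,
      ContinuousLinearMap.add_comp, ContinuousLinearMap.sub_comp,
      ContinuousLinearMap.smul_comp, ContinuousLinearMap.comp_assoc]
    rw [show a (j+1) ∘L (a' (j+1) ∘L adjoint (a j)) = (a (j+1) ∘L a' (j+1)) ∘L adjoint (a j)
        from rfl, (hinv (j+1)).2, hid1, sub_self]
  · simp only [adj0, adjneg, adjoint_comp, adjoint_adjoint, adjsub, adjsmul, adjadd, hbadj,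
      adj1, ContinuousLinearMap.zero_comp, ContinuousLinearMap.comp_zero,
      hid1, hid2, zero_add, add_zero, neg_zero,
      ContinuousLinearMap.neg_comp, ContinuousLinearMap.comp_neg, neg_neg,
      ContinuousLinearMap.add_comp, ContinuousLinearMap.sub_comp, sub_zero, zero_sub,
      ContinuousLinearMap.smul_comp, ContinuousLinearMap.comp_smul,
      ContinuousLinearMap.comp_assoc, hadj, map_sub, map_smul, smul_sub]
    rw [show (a (j+1)).comp ((a' (j+1)).comp (z • (1 : H →L[ℂ] H) - b (j+1)))
        = ((a (j+1)).comp (a' (j+1))).comp (z • (1 : H →L[ℂ] H) - b (j+1)) from rfl,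
      (hinv (j+1)).2, hid1, Complex.conj_conj]
    module

/-- Lemma `lem:3`. -/
theorem statement19 (a b a' : ℕ → H →L[ℂ] H)
    (hinv : ∀ n, Inverts (a n) (a' n)) (hb : ∀ n, IsSelfAdjoint (b n))
    (N : ℕ) (hN : 0 < N) (z : ℂ) (α : H2 H) (u : ℕ → H)
    (hu : GenEigRec a b z u) (hα : pr (u 0) (u 1) = α) :
    ∀ n : ℕ, 1 ≤ n →
      |turanS a a' b N z u (n + 1) - turanS a a' b N z u n| ≤
        ‖prodD (transfer a a' b z) n N‖ * ‖a (n + N)‖ *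
          (‖a' (n + N) ∘L adjoint (a (n + N - 1)) - a' n ∘L adjoint (a (n - 1))‖
            + ‖z‖ * ‖a' (n + N) - a' n‖
            + ‖z - (starRingEnd ℂ) z‖ * ‖a' (n + N)‖
            + ‖a' (n + N) ∘L b (n + N) - a' n ∘L b n‖) *
          (‖u (n - 1)‖ ^ 2 + ‖u n‖ ^ 2) := by
  obtain ⟨k, rfl⟩ : ∃ k, N = k + 1 := ⟨N-1, by omega⟩
  intro n hn
  obtain ⟨m, rfl⟩ : ∃ m, n = m + 1 := ⟨n-1, by omega⟩
  set j := m + k + 1 with hj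
  have e1 : m + 1 + (k+1) - 1 = j := by omega
  have e2 : m + 1 + (k+1) = j + 1 := by omega
  have e3 : m + 1 + 1 + (k+1) - 1 = j + 1 := by omega
  set Bm : ℕ → H2 H →L[ℂ] H2 H := transfer a a' b z with hBdef
  set X := prodD Bm (m+1) (k+1) with hXdef
  set v : H2 H := pr (u m) (u (m+1)) with hvdef
  have hstep : Bm (m+1) v = pr (u (m+1)) (u (m+2)) := gen_step a b a' hinv z u hu m
  have hXs : prodD Bm (m+1+1) (k+1) ∘L Bm (m+1) = Bm (j+1) ∘L X := by
    rw [hXdef, ← e2]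
    exact prodD_shift Bm (m+1) (k+1)
  have hXsv : prodD Bm (m+1+1) (k+1) (pr (u (m+1)) (u (m+2))) = Bm (j+1) (X v) := by
    rw [← hstep, ← comp_apply, hXs, comp_apply]
  set T1' : H2 H →L[ℂ] H2 H := blk (a (j+1)) 0 0 (adjoint (a (j+1))) with hT1'
  set T1 : H2 H →L[ℂ] H2 H := blk (a j) 0 0 (adjoint (a j)) with hT1
  set Em : H2 H →L[ℂ] H2 H := blk 0 (-1) 1 0 with hEm
  have hS1 : turanS a a' b (k+1) z u (m+1+1)
      = (inner ℂ ((adjoint (Bm (m+1)) ∘L (T1' ∘L (Em ∘L Bm (j+1)))) (X v)) v : ℂ).re := by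
    rw [turanS, turanOp, re_inner_sym]
    rw [show m+1+1+(k+1)-1 = j+1 from e3]
    have hid : (pr (u (m+1+1-1)) (u (m+1+1)) : H2 H) = pr (u (m+1)) (u (m+2)) := rfl
    rw [hid, ← hstep]
    simp only [comp_apply]
    rw [← comp_apply (prodD Bm (m+1+1) (k+1)) (Bm (m+1)) v, hXs, comp_apply,
      ← adjoint_inner_left (Bm (m+1))]
  have hS2 : turanS a a' b (k+1) z u (m+1)
      = (inner ℂ ((T1 ∘L Em) (X v)) v : ℂ).re := by
    rw [turanS, turanOp, re_inner_sym]
    rw [show m+1+(k+1)-1 = j from e1]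
    simp only [comp_apply]
    rfl
  set YY := a' (j+1) ∘L adjoint (a j) - a' (m+1) ∘L adjoint (a m) with hYY
  set WW := -(z • (a' (j+1) - a' (m+1))) + (z - (starRingEnd ℂ) z) • a' (j+1)
      + (a' (j+1) ∘L b (j+1) - a' (m+1) ∘L b (m+1)) with hWW
  set Δ : H2 H →L[ℂ] H2 H :=
    blk 0 (adjoint YY ∘L adjoint (a (j+1))) 0 (adjoint WW ∘L adjoint (a (j+1))) with hΔ
  have hdiff : turanS a a' b (k+1) z u (m+1+1) - turanS a a' b (k+1) z u (m+1)
      = (inner ℂ (Δ (X v)) v : ℂ).re := by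
    rw [hS1, hS2, hΔ, ← delta_eq a b a' hinv hb z m j]
    simp only [sub_apply, comp_apply, inner_sub_left, Complex.sub_re]
    rfl
  rw [hdiff]
  rw [show m+1+(k+1)-1 = j from e1, show m+1+(k+1) = j+1 from e2,
    show m+1-1 = m from rfl]
  set t1 := ‖a' (j+1) ∘L adjoint (a j) - a' (m+1) ∘L adjoint (a m)‖ with ht1
  set t2 := ‖z‖ * ‖a' (j+1) - a' (m+1)‖ with ht2
  set t3 := ‖z - (starRingEnd ℂ) z‖ * ‖a' (j+1)‖ with ht3
  set t4 := ‖a' (j+1) ∘L b (j+1) - a' (m+1) ∘L b (m+1)‖ with ht4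
  have hWWn : ‖WW‖ ≤ t2 + t3 + t4 := by
    rw [hWW]
    refine le_trans (norm_add_le _ _) ?_
    refine add_le_add (le_trans (norm_add_le _ _) (add_le_add ?_ ?_)) le_rfl
    · rw [norm_neg, norm_smul, ht2]
    · rw [norm_smul, ht3]
  have hadjnorm : ∀ T : H →L[ℂ] H, ‖adjoint T‖ = ‖T‖ := fun T =>
    LinearIsometryEquiv.norm_map adjoint T
  have hΔn : ‖Δ‖ ≤ ‖a (j+1)‖ * (t1 + t2 + t3 + t4) := by
    refine le_trans (norm_blk_0B0D_le _ _) ?_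
    have h1 : ‖adjoint YY ∘L adjoint (a (j+1))‖ ≤ t1 * ‖a (j+1)‖ := by
      refine le_trans (opNorm_comp_le _ _) ?_
      rw [hadjnorm, hadjnorm, ht1, hYY]
    have h2 : ‖adjoint WW ∘L adjoint (a (j+1))‖ ≤ (t2 + t3 + t4) * ‖a (j+1)‖ := by
      refine le_trans (opNorm_comp_le _ _) ?_
      rw [hadjnorm, hadjnorm]
      exact mul_le_mul_of_nonneg_right hWWn (norm_nonneg _)
    nlinarith [norm_nonneg (a (j+1))]
  have hbound : |(inner ℂ (Δ (X v)) v : ℂ).re| ≤ ‖Δ‖ * ‖X‖ * ‖v‖^2 := by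
    have hre := Complex.abs_re_le_norm (inner ℂ (Δ (X v)) v)
    have hcs : ‖inner ℂ (Δ (X v)) v‖ ≤ ‖Δ (X v)‖ * ‖v‖ := by
      exact norm_inner_le_norm _ _
    have h3 : ‖Δ (X v)‖ ≤ ‖Δ‖ * ‖X v‖ := le_opNorm _ _
    have h4 : ‖X v‖ ≤ ‖X‖ * ‖v‖ := le_opNorm _ _
    have hv0 := norm_nonneg v
    have hΔ0 := opNorm_nonneg Δ
    calc |(inner ℂ (Δ (X v)) v : ℂ).re| ≤ ‖inner ℂ (Δ (X v)) v‖ := hre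
      _ ≤ ‖Δ (X v)‖ * ‖v‖ := hcs
      _ ≤ (‖Δ‖ * ‖X v‖) * ‖v‖ := mul_le_mul_of_nonneg_right h3 hv0
      _ ≤ (‖Δ‖ * (‖X‖ * ‖v‖)) * ‖v‖ :=
          mul_le_mul_of_nonneg_right (mul_le_mul_of_nonneg_left h4 hΔ0) hv0
      _ = ‖Δ‖ * ‖X‖ * ‖v‖^2 := by ring
  have hvsq : ‖v‖^2 = ‖u m‖^2 + ‖u (m+1)‖^2 := norm_pr_sq _ _
  calc |(inner ℂ (Δ (X v)) v : ℂ).re| ≤ ‖Δ‖ * ‖X‖ * ‖v‖^2 := hbound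
    _ ≤ (‖a (j+1)‖ * (t1 + t2 + t3 + t4)) * ‖X‖ * ‖v‖^2 :=
        mul_le_mul_of_nonneg_right
          (mul_le_mul_of_nonneg_right hΔn (opNorm_nonneg X)) (sq_nonneg ‖v‖)
    _ = ‖X‖ * ‖a (j+1)‖ * (t1 + t2 + t3 + t4) * (‖u m‖^2 + ‖u (m+1)‖^2) := by
        rw [← hvsq]; ring
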